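/- arXiv:1210.3146 — 2 statements merged into one kernel-verified Lean document; each statement's English description precedes it below -/
import Mathlib

section
/- Let w be a nonempty finite word. Then every position i of w (1 ≤ i ≤ |w|) introduces at least one complete return factor of w. -/
/-- Number of occurrences of `u` as a factor of `w` (positions are 0-indexed). -/
noncomputable def occCount {A : Type*} (u w : List A) : ℕ :=
  Set.ncard {i : ℕ | i + u.length ≤ w.length ∧ (w.drop i).take u.length = u}

/-- `v` is a complete first return to `u`: `u` is a prefix and a suffix of `v`,
and `u` has exactly two occurrences in `v`. -/
def IsCompleteFirstReturn {A : Type*} (v u : List A) : Prop :=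
  u <+: v ∧ u <:+ v ∧ occCount u v = 2

/-- Privileged words: the empty word and the single letters are privileged, and a word of
length at least 2 is privileged if it is a complete first return to a shorter privileged word. -/
inductive Privileged {A : Type*} : List A → Prop where
  | nil : Privileged ([] : List A)
  | single (a : A) : Privileged [a]
  | ret (w u : List A) : 2 ≤ w.length → u.length < w.length → Privileged u →
      IsCompleteFirstReturn w u → Privileged w

/-- A complete return word: a complete first return to some word
(the empty word counted by convention; letters are complete first returns to the empty word). -/
def IsCompleteReturnWord {A : Type*} (v : List A) : Prop :=
  v = [] ∨ ∃ u : List A, IsCompleteFirstReturn v u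

/-- Position `i` of `w` (1-based, `1 ≤ i ≤ |w|`) introduces the factor `u`:
`u` occurs in `w` ending at position `i` and `u` occurs exactly once in the prefix `w[1,i]`. -/
def Introduces {A : Type*} (w : List A) (i : ℕ) (u : List A) : Prop :=
  1 ≤ i ∧ i ≤ w.length ∧ u <:+ w.take i ∧ occCount u (w.take i) = 1

/-- A finite word is rich if it has exactly `|w| + 1` distinct palindromic factors. -/
noncomputable def RichWord {A : Type*} (w : List A) : Prop :=
  Set.ncard {u : List A | u <:+: w ∧ u.reverse = u} = w.length + 1

/-- `u` is a (finite) factor of the infinite word `w`. -/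
def IsFactorInf {A : Type*} (w : ℕ → A) (u : List A) : Prop :=
  ∃ i : ℕ, u = (List.range u.length).map fun k => w (i + k)

/-- A Q-property of finite words. -/
structure IsQProperty {A : Type*} (Q : List A → Prop) : Prop where
  q_nil : Q []
  q_single : ∀ a : A, Q [a]
  ends_at_every_position : ∀ (w : List A) (i : ℕ), 1 ≤ i → i ≤ w.length →
    ∃ u : List A, u ≠ [] ∧ u <:+ w.take i ∧ Q u
  introduces_at_most_one : ∀ (w : List A) (i : ℕ) (u v : List A),
    Introduces w i u → Introduces w i v → Q u → Q v → u = v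

/-- Q-complexity of an infinite word: the number of distinct factors of length `n`
having property `Q`. -/
noncomputable def qComplexityInf {A : Type*} (w : ℕ → A) (Q : List A → Prop) (n : ℕ) : ℕ :=
  Set.ncard {u : List A | IsFactorInf w u ∧ Q u ∧ u.length = n}

/-- Privileged complexity of an infinite word. -/
noncomputable def privComplexityInf {A : Type*} (w : ℕ → A) (n : ℕ) : ℕ :=
  Set.ncard {u : List A | IsFactorInf w u ∧ Privileged u ∧ u.length = n}

/-- Palindromic complexity of an infinite word. -/
noncomputable def palComplexityInf {A : Type*} (w : ℕ → A) (n : ℕ) : ℕ :=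
  Set.ncard {u : List A | IsFactorInf w u ∧ u.reverse = u ∧ u.length = n}

/-- An infinite word is ultimately periodic if it is of the form `u v v v ⋯`
with `v` nonempty. -/
def UltimatelyPeriodic {A : Type*} (w : ℕ → A) : Prop :=
  ∃ u v : List A, v ≠ [] ∧ ∀ n : ℕ, w n =
    if n < u.length then u.getD n (w 0)
    else v.getD ((n - u.length) % v.length) (w 0)

/-- An infinite word is Sturmian if it has exactly `n + 1` distinct factors of
length `n` for every `n`. -/
def Sturmian {A : Type*} (w : ℕ → A) : Prop :=
  ∀ n : ℕ, Set.ncard {u : List A | IsFactorInf w u ∧ u.length = n} = n + 1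

/-- A finite binary word is balanced: its set of factors is balanced. -/
def BalancedWord (x : List Bool) : Prop :=
  ∀ u v : List Bool, u <:+: x → v <:+: x → u.length = v.length →
    ((u.count true : ℤ) - (v.count true : ℤ)).natAbs ≤ 1

/-- `u` is a right special factor of the infinite word `w`. -/
def RightSpecial {A : Type*} (w : ℕ → A) (u : List A) : Prop :=
  ∃ a b : A, a ≠ b ∧ IsFactorInf w (u ++ [a]) ∧ IsFactorInf w (u ++ [b])

/-- The Thue-Morse word: the `n`-th letter is the parity of the number of ones in the
binary expansion of `n` (`false` = 0, `true` = 1). -/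
def thueMorse (n : ℕ) : Bool := (Nat.digits 2 n).count 1 % 2 == 1

/-- The set of (starting positions of) occurrences of `u` in `w`. -/
def occSet {A : Type*} (u w : List A) : Set ℕ :=
  {i : ℕ | i + u.length ≤ w.length ∧ (w.drop i).take u.length = u}

lemma occCount_def {A : Type*} (u w : List A) : occCount u w = (occSet u w).ncard := rfl

lemma suffix_drop_eq {A : Type*} {u w : List A} (h : u <:+ w) :
    w.drop (w.length - u.length) = u := (List.suffix_iff_eq_drop.mp h).symm

lemma suffix_mem_occSet {A : Type*} {u w : List A} (h : u <:+ w) :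
    (w.length - u.length) ∈ occSet u w := by
  have hl := h.length_le
  have hd := suffix_drop_eq h
  refine ⟨by omega, ?_⟩
  rw [hd, List.take_length]

lemma occSet_drop {A : Type*} (u w : List A) (t j : ℕ) (ht : t ≤ w.length) :
    j ∈ occSet u (w.drop t) ↔ t + j ∈ occSet u w := by
  simp only [occSet, Set.mem_setOf_eq, List.length_drop, List.drop_drop]
  constructor
  · rintro ⟨h1, h2⟩; exact ⟨by omega, h2⟩
  · rintro ⟨h1, h2⟩; exact ⟨by omega, h2⟩

/-- If `r` occurs at position `j` in `w` and `u` is a suffix of `r`, then `u` occurs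
at position `j + (|r| - |u|)` in `w`. -/
lemma suffix_occ {A : Type*} {u r w : List A} {j : ℕ} (hj : j ∈ occSet r w)
    (h : u <:+ r) : j + (r.length - u.length) ∈ occSet u w := by
  obtain ⟨h1, h2⟩ := hj
  have hl := h.length_le
  set k := r.length - u.length with hk
  have e1 : ((w.drop j).take r.length).drop k = (w.drop (j + k)).take u.length := by
    rw [List.drop_take, List.drop_drop]
    congr 1
    omega
  refine ⟨by omega, ?_⟩
  have e2 : (w.drop (j + k)).take u.length = r.drop k := by rw [← e1, h2]
  rw [e2]
  exact (List.suffix_iff_eq_drop.mp h).symm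

/-- Every position `i` (with `1 ≤ i ≤ |w|`) of a nonempty finite word `w`
introduces at least one complete return factor of `w`. -/
theorem every_position_introduces_complete_return_factor {A : Type*} (w : List A)
    (hw : w ≠ []) (i : ℕ) (hi1 : 1 ≤ i) (hi2 : i ≤ w.length) :
    ∃ u : List A, Introduces w i u ∧ IsCompleteReturnWord u := by
  classical
  set p := w.take i with hp
  have hplen : p.length = i := by
    rw [hp, List.length_take]; omega
  -- the set of lengths of suffixes of `p` occurring exactly once in `p` is nonempty
  have hex : ∃ n : ℕ, ∃ u : List A, u.length = n ∧ u <:+ p ∧ occCount u p = 1 := by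
    refine ⟨i, p, hplen, List.suffix_rfl, ?_⟩
    rw [occCount_def]
    have : occSet p p = {0} := by
      ext j
      simp only [occSet, Set.mem_setOf_eq, Set.mem_singleton_iff]
      constructor
      · rintro ⟨h1, _⟩; omega
      · rintro rfl
        exact ⟨by omega, by simp [List.take_length]⟩
    rw [this, Set.ncard_singleton]
  set n₀ := Nat.find hex with hn₀
  obtain ⟨u, hu_len, hu_suf, hu_occ⟩ := Nat.find_spec hex
  have hmin : ∀ m < n₀, ¬ ∃ u : List A, u.length = m ∧ u <:+ p ∧ occCount u p = 1 :=
    fun m hm => Nat.find_min hex hm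
  have hn₀i : n₀ ≤ i := by
    have := hu_suf.length_le; omega
  -- `n₀ ≠ 0` since the empty word occurs `i + 1 ≥ 2` times
  have hn₀pos : 1 ≤ n₀ := by
    by_contra hc
    have hu0 : u = [] := List.length_eq_zero_iff.mp (by omega)
    obtain ⟨a, ha⟩ := Set.ncard_eq_one.mp (occCount_def u p ▸ hu_occ)
    have h0 : (0 : ℕ) ∈ occSet u p := ⟨by simp [hu0], by simp [hu0]⟩
    have h1 : (1 : ℕ) ∈ occSet u p := ⟨by simp [hu0]; omega, by simp [hu0]⟩
    rw [ha] at h0 h1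
    simp only [Set.mem_singleton_iff] at h0 h1
    omega
  rcases Nat.lt_or_ge n₀ 2 with hn2 | hn2
  · -- `n₀ = 1`: a single letter, a complete first return to the empty word
    refine ⟨u, ⟨hi1, hi2, hu_suf, hu_occ⟩, Or.inr ⟨[], ?_, ?_, ?_⟩⟩
    · exact List.nil_prefix
    · exact List.nil_suffix
    · rw [occCount_def]
      have : occSet ([] : List A) u = {0, 1} := by
        ext j
        simp only [occSet, Set.mem_setOf_eq, List.length_nil, List.take_zero,
          Set.mem_insert_iff, Set.mem_singleton_iff]
        constructor
        · rintro ⟨h1, -⟩; omega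
        · rintro (rfl | rfl) <;> exact ⟨by omega, by simp⟩
      rw [this, Set.ncard_pair (by omega : (0 : ℕ) ≠ 1)]
  · -- `n₀ ≥ 2`: build a complete first return
    set s := u.drop 1 with hs
    have hs_len : s.length = n₀ - 1 := by rw [hs, List.length_drop, hu_len]
    have hs_suf : s <:+ p := (List.drop_suffix 1 u).trans hu_suf
    set j₀ := i - s.length with hj₀def
    have hj₀ : j₀ ∈ occSet s p := by
      have := suffix_mem_occSet hs_suf
      rwa [hplen] at this
    have hsle : s.length ≤ i := by omega
    -- there is a second occurrence of `s`, by minimality of `n₀`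
    have hx : ∃ x, x ∈ occSet s p ∧ x ≠ j₀ := by
      by_contra hcon
      push_neg at hcon
      refine hmin (n₀ - 1) (by omega) ⟨s, hs_len, hs_suf, ?_⟩
      rw [occCount_def, Set.ncard_eq_one]
      refine ⟨j₀, Set.eq_singleton_iff_unique_mem.mpr ⟨hj₀, ?_⟩⟩
      intro x hxm
      exact hcon x hxm
    obtain ⟨x, hx_mem, hx_ne⟩ := hx
    have hx_le : x ≤ j₀ := by
      have := hx_mem.1; rw [hplen] at this; omega
    set Q : ℕ → Prop := fun m => m ∈ occSet s p ∧ m ≠ j₀ with hQ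
    set j₁ := Nat.findGreatest Q j₀ with hj₁def
    have hQx : Q x := by simp only [hQ]; exact ⟨hx_mem, hx_ne⟩
    have hj₁ : j₁ ∈ occSet s p ∧ j₁ ≠ j₀ := by
      have h := Nat.findGreatest_spec hx_le hQx
      simpa only [hQ] using h
    have hj₁_le : j₁ ≤ j₀ := Nat.findGreatest_le j₀
    have hj₁_lt : j₁ < j₀ := lt_of_le_of_ne hj₁_le hj₁.2
    have hmax : ∀ m, j₁ < m → m ∈ occSet s p → m = j₀ := by
      intro m hm hmem
      by_contra hne
      have hmle : m ≤ j₀ := by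
        have := hmem.1; rw [hplen] at this; omega
      have hQm : Q m := by simp only [hQ]; exact ⟨hmem, hne⟩
      exact Nat.findGreatest_is_greatest hm hmle hQm
    set r := p.drop j₁ with hr
    have hr_len : r.length = i - j₁ := by rw [hr, List.length_drop, hplen]
    have hu_le_r : u.length ≤ r.length := by omega
    have hj₁p : j₁ ≤ p.length := by omega
    -- `s` is a prefix of `r`
    have hpre : s <+: r := by
      rw [List.prefix_iff_eq_take]
      exact hj₁.1.2.symm
    -- `s` is a suffix of `r`
    have hsdrop : p.drop j₀ = s := by
      have := suffix_drop_eq hs_suf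
      rwa [hplen] at this
    have hsuf : s <:+ r := by
      have : r.drop (j₀ - j₁) = s := by
        rw [hr, List.drop_drop, show j₁ + (j₀ - j₁) = j₀ by omega, hsdrop]
      rw [← this]
      exact List.drop_suffix _ _
    -- `s` occurs exactly twice in `r`
    have hocc2 : occCount s r = 2 := by
      rw [occCount_def]
      have hset : occSet s r = {0, j₀ - j₁} := by
        ext j
        rw [hr, occSet_drop s p j₁ j hj₁p]
        simp only [Set.mem_insert_iff, Set.mem_singleton_iff]
        constructor
        · intro hmem
          rcases Nat.eq_zero_or_pos j with rfl | hjpos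
          · exact Or.inl rfl
          · have := hmax (j₁ + j) (by omega) hmem
            right; omega
        · rintro (rfl | rfl)
          · simpa using hj₁.1
          · rw [show j₁ + (j₀ - j₁) = j₀ by omega]
            exact hj₀
      rw [hset, Set.ncard_pair (by omega : (0 : ℕ) ≠ j₀ - j₁)]
    -- `r` occurs exactly once in `p`
    have hu_drop : r.drop (i - n₀ - j₁) = u := by
      rw [hr, List.drop_drop, show j₁ + (i - n₀ - j₁) = i - n₀ by omega]
      have := suffix_drop_eq hu_suf
      rwa [hplen, hu_len] at this
    have hur : u <:+ r := hu_drop ▸ List.drop_suffix _ _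
    have hocc1 : occCount r p = 1 := by
      rw [occCount_def]
      have hj₁r : j₁ ∈ occSet r p := by
        refine ⟨by omega, ?_⟩
        rw [show p.drop j₁ = r from hr.symm]
        exact List.take_length
      have huniq : ∀ j ∈ occSet r p, j = j₁ := by
        intro j hj
        have hocc_u : j + (r.length - u.length) ∈ occSet u p := suffix_occ hj hur
        have hsufu : p.length - u.length ∈ occSet u p := suffix_mem_occSet hu_suf
        obtain ⟨a, ha⟩ := Set.ncard_eq_one.mp (occCount_def u p ▸ hu_occ)
        rw [ha] at hocc_u hsufu
        simp only [Set.mem_singleton_iff] at hocc_u hsufu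
        have hjr : j + r.length ≤ i := by
          have := hj.1; omega
        omega
      rw [Set.eq_singleton_iff_unique_mem.mpr ⟨hj₁r, huniq⟩, Set.ncard_singleton]
    exact ⟨r, ⟨hi1, hi2, hr ▸ List.drop_suffix j₁ p, hocc1⟩,
      Or.inr ⟨s, hpre, hsuf, hocc2⟩⟩
end

section
/- Every finite word w has exactly |w|+1 distinct privileged factors (counting the empty word); that is, every word is rich in privileged words. -/
section Aux
open Classical in
variable {A : Type*}

/-- occurrence predicate -/
def Occ (u w : List A) (i : ℕ) : Prop :=
  i + u.length ≤ w.length ∧ (w.drop i).take u.length = u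

open Classical in
noncomputable def occF (u w : List A) : Finset ℕ :=
  (Finset.range (w.length + 1)).filter (fun i => Occ u w i)

open Classical in
lemma mem_occF {u w : List A} {i : ℕ} : i ∈ occF u w ↔ Occ u w i := by
  simp only [occF, Finset.mem_filter, Finset.mem_range]
  constructor
  · exact fun h => h.2
  · intro h; exact ⟨by have := h.1; omega, h⟩

lemma occCount_eq_card (u w : List A) : occCount u w = (occF u w).card := by
  have : {i : ℕ | i + u.length ≤ w.length ∧ (w.drop i).take u.length = u} = ↑(occF u w) := by
    ext i
    simp only [Set.mem_setOf_eq, Finset.mem_coe, mem_occF, Occ]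
  rw [occCount, this, Set.ncard_coe_finset]

lemma occ_iff_prefix {u w : List A} {i : ℕ} :
    Occ u w i ↔ i + u.length ≤ w.length ∧ u <+: w.drop i := by
  constructor
  · rintro ⟨h1, h2⟩
    exact ⟨h1, h2 ▸ List.take_prefix _ _⟩
  · rintro ⟨h1, h2⟩
    exact ⟨h1, (List.prefix_iff_eq_take.mp h2).symm⟩

lemma occ_zero_iff {u w : List A} : Occ u w 0 ↔ u <+: w := by
  rw [occ_iff_prefix, List.drop_zero]
  constructor
  · exact fun h => h.2
  · exact fun h => ⟨by simpa using h.length_le, h⟩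

lemma occ_end_iff {u w : List A} (h : u.length ≤ w.length) :
    Occ u w (w.length - u.length) ↔ u <:+ w := by
  constructor
  · rintro ⟨h1, h2⟩
    have hl : (w.drop (w.length - u.length)).length = u.length := by
      simp; omega
    rw [List.take_of_length_le (le_of_eq hl)] at h2
    exact List.suffix_iff_eq_drop.mpr h2.symm
  · intro hs
    have hd : w.drop (w.length - u.length) = u := (List.suffix_iff_eq_drop.mp hs).symm
    refine ⟨by omega, ?_⟩
    rw [hd]
    exact List.take_of_length_le le_rfl

lemma occ_suffix_end {u w : List A} (hu : u ≠ []) (hs : u <:+ w) :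
    Occ u w (w.length - u.length) :=
  (occ_end_iff hs.length_le).mpr hs

/-- transfer occurrences along drop -/
lemma occ_drop_iff {u w : List A} {j i : ℕ} (hj : j ≤ w.length) :
    Occ u (w.drop j) i ↔ Occ u w (j + i) := by
  unfold Occ
  rw [List.drop_drop, List.length_drop]
  constructor
  · rintro ⟨h1, h2⟩; exact ⟨by omega, h2⟩
  · rintro ⟨h1, h2⟩; exact ⟨by omega, h2⟩

/-- occurrences in a prefix are occurrences -/
lemma occ_append {u xs : List A} (t : List A) {i : ℕ} (h : Occ u xs i) :
    Occ u (xs ++ t) i := by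
  obtain ⟨h1, h2⟩ := h
  refine ⟨by simp; omega, ?_⟩
  rw [List.drop_append_of_le_length (by omega), List.take_append_of_le_length (by simp; omega), h2]

lemma infix_iff_exists_occ {u w : List A} : u <:+: w ↔ ∃ i, Occ u w i := by
  constructor
  · rintro ⟨s, t, rfl⟩
    refine ⟨s.length, ?_⟩
    rw [occ_iff_prefix]
    constructor
    · simp only [List.length_append]; omega
    · rw [List.append_assoc, List.drop_left]
      exact List.prefix_append u t
  · rintro ⟨i, hi⟩
    rw [occ_iff_prefix] at hi
    exact hi.2.isInfix.trans (List.drop_suffix i w).isInfix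

lemma occ_le {u w : List A} {i : ℕ} (h : Occ u w i) : i + u.length ≤ w.length := h.1

/-- If occCount = 2 with occurrences at 0 and the end, those are the only ones. -/
lemma occ_of_count_two {u v : List A} (hlt : u.length < v.length)
    (hp : u <+: v) (hs : u <:+ v) (h2 : occCount u v = 2) :
    ∀ i, Occ u v i → i = 0 ∨ i = v.length - u.length := by
  classical
  have h0 : (0 : ℕ) ∈ occF u v := mem_occF.mpr (occ_zero_iff.mpr hp)
  have he : v.length - u.length ∈ occF u v :=
    mem_occF.mpr ((occ_end_iff (le_of_lt hlt)).mpr hs)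
  have hne : v.length - u.length ≠ 0 := by omega
  have hsub : ({0, v.length - u.length} : Finset ℕ) ⊆ occF u v := by
    intro x hx
    simp only [Finset.mem_insert, Finset.mem_singleton] at hx
    rcases hx with rfl | rfl
    · exact h0
    · exact he
  have hcard : (occF u v).card ≤ ({0, v.length - u.length} : Finset ℕ).card := by
    rw [← occCount_eq_card, h2]
    rw [Finset.card_insert_of_notMem (by simp [Ne.symm hne]), Finset.card_singleton]
  have := Finset.eq_of_subset_of_card_le hsub hcard
  intro i hi
  have : i ∈ ({0, v.length - u.length} : Finset ℕ) := this ▸ mem_occF.mpr hi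
  simpa using this

/-- Lemma A: a privileged suffix of a privileged word is a prefix. -/
lemma priv_suffix_prefix : ∀ n : ℕ, ∀ u v : List A, v.length ≤ n →
    Privileged u → Privileged v → u <:+ v → u <+: v := by
  intro n
  induction n with
  | zero =>
    intro u v hv _ _ hs
    have : v = [] := List.length_eq_zero_iff.mp (by omega)
    subst this
    simpa using List.suffix_nil.mp hs
  | succ n ih =>
    intro u v hv hu hpv hs
    rcases Nat.lt_or_ge u.length v.length with hlt | hge
    · -- u proper suffix
      cases hpv with
      | nil => simp at hlt
      | single a =>
        have h1 : u.length < 1 := by simpa using hlt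
        have : u = [] := List.length_eq_zero_iff.mp (by omega)
        simp [this]
      | ret v p h2 hplt hpp hret =>
        obtain ⟨hpre, hsuf, hcnt⟩ := hret
        rcases le_or_gt u.length p.length with hle | hgt
        · -- u suffix of p, by IH prefix of p, hence of v
          have hup : u <:+ p := List.suffix_of_suffix_length_le hs hsuf hle
          exact (ih u p (by omega) hu hpp hup).trans hpre
        · -- p proper suffix of u; IH : p prefix of u
          have hpu : p <:+ u := List.suffix_of_suffix_length_le hsuf hs (by omega)
          have hppref : p <+: u := ih p u (by omega) hpp hu hpu
          -- occurrence of p at position v.length - u.length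
          have hocc : Occ p v (v.length - u.length) := by
            rw [occ_iff_prefix]
            refine ⟨by omega, ?_⟩
            have : v.drop (v.length - u.length) = u := (List.suffix_iff_eq_drop.mp hs).symm
            rw [this]; exact hppref
          have := occ_of_count_two hplt hpre hsuf hcnt _ hocc
          rcases this with h0 | hend
          · omega
          · omega
    · -- lengths equal: u = v
      have : u = v := List.IsSuffix.eq_of_length hs (le_antisymm hs.length_le hge)
      exact this ▸ List.prefix_refl _

lemma priv_suffix_prefix' {u v : List A} (hu : Privileged u) (hv : Privileged v)
    (hs : u <:+ v) : u <+: v :=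
  priv_suffix_prefix v.length u v le_rfl hu hv hs

/-- Lemma B: the longest privileged suffix occurs exactly once. -/
lemma longest_priv_suffix_unique_occ {u w : List A} (hu : u ≠ []) (hpu : Privileged u)
    (hs : u <:+ w) (hmax : ∀ u' : List A, u' <:+ w → Privileged u' → u'.length ≤ u.length) :
    occCount u w = 1 := by
  classical
  set e := w.length - u.length with he
  have hocc_e : Occ u w e := occ_suffix_end hu hs
  have hulen : u.length ≤ w.length := hs.length_le
  have hupos : 0 < u.length := List.length_pos_iff.mpr hu
  by_contra hne
  -- there is another occurrence
  have hmem_e : e ∈ occF u w := mem_occF.mpr hocc_e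
  have hF : (occF u w).card ≠ 1 := by rwa [← occCount_eq_card]
  have hexists : ((occF u w).erase e).Nonempty := by
    by_contra hemp
    rw [Finset.not_nonempty_iff_eq_empty] at hemp
    have : occF u w = {e} := by
      apply Finset.eq_singleton_iff_unique_mem.mpr
      refine ⟨hmem_e, fun x hx => ?_⟩
      by_contra hxe
      have : x ∈ (occF u w).erase e := Finset.mem_erase.mpr ⟨hxe, hx⟩
      rw [hemp] at this; simp at this
    rw [this] at hF; simp at hF
  obtain ⟨j, hjmem, hjmax⟩ := Finset.exists_max_image _ id hexists
  have hjF : j ∈ occF u w := (Finset.mem_erase.mp hjmem).2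
  have hjne : j ≠ e := (Finset.mem_erase.mp hjmem).1
  have hjocc : Occ u w j := mem_occF.mp hjF
  have hjle : j + u.length ≤ w.length := hjocc.1
  have hjlt : j < e := by omega
  -- the return word
  set v := w.drop j with hv
  have hvlen : v.length = w.length - j := by simp [hv]
  have hjw : j ≤ w.length := by omega
  have hocc0 : Occ u v 0 := by rw [hv, occ_drop_iff hjw]; simpa using hjocc
  have hoccend : Occ u v (v.length - u.length) := by
    rw [hv, occ_drop_iff hjw]
    have hve : j + ((w.drop j).length - u.length) = e := by simp; omega
    rw [hve]; exact hocc_e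
  have hupre : u <+: v := occ_zero_iff.mp hocc0
  have hulenv : u.length ≤ v.length := by omega
  have husuf : u <:+ v := (occ_end_iff hulenv).mp hoccend
  have hultv : u.length < v.length := by omega
  -- count occurrences in v
  have hcount : occCount u v = 2 := by
    rw [occCount_eq_card]
    have : occF u v = {0, v.length - u.length} := by
      apply Finset.Subset.antisymm
      · intro i hi
        have hiocc : Occ u v i := mem_occF.mp hi
        rw [hv] at hiocc
        have hiw : Occ u w (j + i) := (occ_drop_iff hjw).mp hiocc
        have hji : j + i ∈ occF u w := mem_occF.mpr hiw
        rcases eq_or_ne (j + i) e with heq | hneq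
        · simp only [Finset.mem_insert, Finset.mem_singleton]
          right; omega
        · have : j + i ∈ (occF u w).erase e := Finset.mem_erase.mpr ⟨hneq, hji⟩
          have := hjmax _ this
          simp only [id] at this
          have : i = 0 := by omega
          simp [this]
      · intro i hi
        simp only [Finset.mem_insert, Finset.mem_singleton] at hi
        rcases hi with rfl | rfl
        · exact mem_occF.mpr hocc0
        · exact mem_occF.mpr hoccend
    rw [this, Finset.card_insert_of_notMem (Finset.notMem_singleton.mpr (by omega)), Finset.card_singleton]
  -- v is privileged, longer suffix: contradiction
  have hpv : Privileged v :=
    Privileged.ret v u (by omega) hultv hpu ⟨hupre, husuf, hcount⟩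
  have := hmax v (List.drop_suffix j w) hpv
  omega

end Aux

section Main
variable {A : Type*}

lemma occ_append_inv {u xs t : List A} {i : ℕ} (h : Occ u (xs ++ t) i)
    (hle : i + u.length ≤ xs.length) : Occ u xs i := by
  obtain ⟨h1, h2⟩ := h
  refine ⟨hle, ?_⟩
  rw [List.drop_append_of_le_length (by omega),
    List.take_append_of_le_length (by simp only [List.length_drop]; omega)] at h2
  exact h2

lemma priv_factors_finite (xs : List A) :
    {u : List A | u <:+: xs ∧ Privileged u}.Finite := by
  apply Set.Finite.subset xs.sublists.finite_toSet
  intro u hu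
  exact List.mem_sublists.mpr hu.1.sublist

theorem privileged_factors_count' (w : List A) :
    Set.ncard {u : List A | u <:+: w ∧ Privileged u} = w.length + 1 := by
  classical
  induction w using List.reverseRecOn with
  | nil =>
    have : {u : List A | u <:+: ([] : List A) ∧ Privileged u} = {([] : List A)} := by
      ext u
      simp only [Set.mem_setOf_eq, Set.mem_singleton_iff]
      constructor
      · rintro ⟨h, _⟩; exact List.infix_nil.mp h
      · rintro rfl; exact ⟨List.infix_refl _, Privileged.nil⟩
    rw [this]; simp
  | append_singleton xs x ih =>
    set w := xs ++ [x] with hw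
    have hwlen : w.length = xs.length + 1 := by simp [hw]
    -- longest privileged suffix
    set T : Finset (List A) := w.tails.toFinset.filter (fun u => Privileged u) with hT
    have hmemT : ∀ u : List A, u ∈ T ↔ u <:+ w ∧ Privileged u := by
      intro u
      simp [hT, List.mem_tails]
    have hxT : [x] ∈ T := (hmemT [x]).mpr ⟨by rw [hw]; exact List.suffix_append xs [x],
      Privileged.single x⟩
    obtain ⟨u, huT, hmaxT⟩ := Finset.exists_max_image T List.length ⟨[x], hxT⟩
    obtain ⟨husuf, hupriv⟩ := (hmemT u).mp huT
    have hune : u ≠ [] := by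
      intro h
      have := hmaxT [x] hxT
      simp [h] at this
    have hupos : 0 < u.length := List.length_pos_iff.mpr hune
    have hulen : u.length ≤ w.length := husuf.length_le
    have hmax : ∀ u' : List A, u' <:+ w → Privileged u' → u'.length ≤ u.length :=
      fun u' h1 h2 => hmaxT u' ((hmemT u').mpr ⟨h1, h2⟩)
    have hocc1 : occCount u w = 1 := longest_priv_suffix_unique_occ hune hupriv husuf hmax
    -- u is not a factor of xs
    have hnotmem : u ∉ {v : List A | v <:+: xs ∧ Privileged v} := by
      rintro ⟨hinf, -⟩
      obtain ⟨j, hj⟩ := infix_iff_exists_occ.mp hinf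
      have hjw : Occ u w j := hw ▸ occ_append [x] hj
      have hjle : j + u.length ≤ xs.length := hj.1
      have he : Occ u w (w.length - u.length) := occ_suffix_end hune husuf
      have hne : j ≠ w.length - u.length := by omega
      have hsub : ({j, w.length - u.length} : Finset ℕ) ⊆ occF u w := by
        intro i hi
        simp only [Finset.mem_insert, Finset.mem_singleton] at hi
        rcases hi with rfl | rfl
        · exact mem_occF.mpr hjw
        · exact mem_occF.mpr he
      have h2 : 2 ≤ (occF u w).card := by
        calc 2 = ({j, w.length - u.length} : Finset ℕ).card := by
              rw [Finset.card_insert_of_notMem (Finset.notMem_singleton.mpr hne),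
                Finset.card_singleton]
          _ ≤ (occF u w).card := Finset.card_le_card hsub
      rw [← occCount_eq_card, hocc1] at h2
      omega
    -- set equality
    have hset : {v : List A | v <:+: w ∧ Privileged v} =
        insert u {v : List A | v <:+: xs ∧ Privileged v} := by
      ext v
      simp only [Set.mem_setOf_eq, Set.mem_insert_iff]
      constructor
      · rintro ⟨hinf, hpv⟩
        obtain ⟨j, hj⟩ := infix_iff_exists_occ.mp hinf
        rcases le_or_gt (j + v.length) xs.length with hle | hgt
        · right
          refine ⟨infix_iff_exists_occ.mpr ⟨j, ?_⟩, hpv⟩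
          exact occ_append_inv (hw ▸ hj) hle
        · -- v is a suffix of w
          have hjlen : j + v.length ≤ w.length := hj.1
          have hjeq : j = w.length - v.length := by omega
          have hvsuf : v <:+ w := (occ_end_iff (by omega)).mp (hjeq ▸ hj)
          rcases eq_or_ne v u with rfl | hvu
          · exact Or.inl rfl
          · right
            have hvle : v.length ≤ u.length := hmax v hvsuf hpv
            have hvu' : v <:+ u := List.suffix_of_suffix_length_le hvsuf husuf hvle
            have hvlt : v.length < u.length := by
              rcases lt_or_eq_of_le hvle with h | h
              · exact h
              · exact absurd (hvu'.eq_of_length h) hvu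
            have hvpre : v <+: u := priv_suffix_prefix' hpv hupriv hvu'
            -- v occurs at position w.length - u.length, ending before the end
            have hocc : Occ v w (w.length - u.length) := by
              rw [occ_iff_prefix]
              refine ⟨by omega, ?_⟩
              have : w.drop (w.length - u.length) = u := (List.suffix_iff_eq_drop.mp husuf).symm
              rw [this]; exact hvpre
            have : Occ v xs (w.length - u.length) := by
              apply occ_append_inv (t := [x]) (hw ▸ hocc)
              omega
            exact ⟨infix_iff_exists_occ.mpr ⟨_, this⟩, hpv⟩
      · rintro (rfl | ⟨hinf, hpv⟩)
        · exact ⟨husuf.isInfix, hupriv⟩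
        · exact ⟨hinf.trans (List.prefix_append xs [x]).isInfix, hpv⟩
    rw [hset, Set.ncard_insert_of_notMem hnotmem (priv_factors_finite xs), ih, hwlen]

end Main

/-- Every finite word `w` has exactly `|w| + 1` distinct privileged factors
(the empty word counted), i.e. every word is rich in privileged words. -/
theorem privileged_factors_count {A : Type*} (w : List A) :
    Set.ncard {u : List A | u <:+: w ∧ Privileged u} = w.length + 1 :=
  privileged_factors_count' w
end
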